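/- For the function g_K(x) defined as g_K(x) = [(1/x)·P(Bin(2K,x) ≥ K+1)] / [(1/(1-x))·P(Bin(2K,1-x) ≥ K+1)] on (0,1), g_K is strictly increasing on (0,1) for every integer K ≥ 1. -/

import Mathlib

open Finset

/-- The binomial tail probability `P(Bin(n, x) ≥ m) = Σ_{i=m}^{n} C(n,i) x^i (1-x)^{n-i}`. -/
noncomputable def binTail (n m : ℕ) (x : ℝ) : ℝ :=
  ∑ i ∈ Finset.Icc m n, (n.choose i : ℝ) * x ^ i * (1 - x) ^ (n - i)

/-- The function `g_K(x) = [(1/x)·P(Bin(2K,x) ≥ K+1)] / [(1/(1-x))·P(Bin(2K,1-x) ≥ K+1)]`. -/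
noncomputable def gK (K : ℕ) (x : ℝ) : ℝ :=
  ((1 / x) * binTail (2 * K) (K + 1) x) / ((1 / (1 - x)) * binTail (2 * K) (K + 1) (1 - x))

lemma hasDerivAt_binTail (K : ℕ) (hK : 1 ≤ K) (y : ℝ) :
    HasDerivAt (fun x => binTail (2 * K) (K + 1) x)
      ((((K : ℝ) + 1) * ((2 * K).choose (K + 1) : ℝ)) * y ^ K * (1 - y) ^ (K - 1)) y := by
  have key : ∀ i ∈ Finset.Icc (K + 1) (2 * K),
      HasDerivAt (fun x : ℝ => ((2 * K).choose i : ℝ) * x ^ i * (1 - x) ^ (2 * K - i))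
        (((i : ℝ) * ((2 * K).choose i : ℝ)) * y ^ (i - 1) * (1 - y) ^ (2 * K - i)
          - (((i : ℝ) + 1) * ((2 * K).choose (i + 1) : ℝ)) * y ^ ((i + 1) - 1) * (1 - y) ^ (2 * K - (i + 1)))
        y := by
    intro i hi
    simp only [Finset.mem_Icc] at hi
    have h1 : HasDerivAt (fun x : ℝ => x ^ i) ((i : ℝ) * y ^ (i - 1)) y := hasDerivAt_pow i y
    have h2 : HasDerivAt (fun x : ℝ => (1 - x) ^ (2 * K - i))
        (((2 * K - i : ℕ) : ℝ) * (1 - y) ^ (2 * K - i - 1) * (-1)) y :=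
      HasDerivAt.fun_pow ((hasDerivAt_id y).const_sub 1) _
    have h3 := (h1.const_mul (((2 * K).choose i : ℝ))).mul h2
    refine h3.congr_deriv (Eq.symm ?_)
    have hcs : ((2 * K).choose (i + 1) : ℝ) * ((i : ℝ) + 1)
        = ((2 * K).choose i : ℝ) * ((2 * K - i : ℕ) : ℝ) := by
      exact_mod_cast Nat.choose_succ_right_eq (2 * K) i
    have he : 2 * K - (i + 1) = 2 * K - i - 1 := by omega
    have he2 : (i + 1) - 1 = i := by omega
    rw [he, he2]
    linear_combination (-(y ^ i * (1 - y) ^ (2 * K - i - 1))) * hcs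
  have hsum := HasDerivAt.fun_sum key
  refine hsum.congr_deriv (Eq.symm ?_)
  set T : ℕ → ℝ := fun j => (j : ℝ) * ((2 * K).choose j : ℝ) * y ^ (j - 1) * (1 - y) ^ (2 * K - j)
    with hT
  have hterm : ∀ i : ℕ, ((i : ℝ) * ((2 * K).choose i : ℝ)) * y ^ (i - 1) * (1 - y) ^ (2 * K - i)
      - (((i : ℝ) + 1) * ((2 * K).choose (i + 1) : ℝ)) * y ^ ((i + 1) - 1) * (1 - y) ^ (2 * K - (i + 1))
      = T i - T (i + 1) := by
    intro i; simp only [hT]; push_cast; ring_nf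
  rw [Finset.sum_congr rfl fun i _ => hterm i]
  rw [← Finset.Ico_add_one_right_eq_Icc, Finset.sum_Ico_eq_sum_range]
  have hk : 2 * K + 1 - (K + 1) = K := by omega
  rw [hk]
  have htel := Finset.sum_range_sub' (fun j => T (K + 1 + j)) K
  simp only [← add_assoc] at htel
  rw [htel, show K + 1 + 0 = K + 1 from rfl, show K + 1 + K = 2 * K + 1 from by omega]
  have hz : T (2 * K + 1) = 0 := by
    simp [hT, Nat.choose_eq_zero_of_lt (by omega : 2 * K < 2 * K + 1)]
  rw [hz, sub_zero]
  have h1 : 2 * K - (K + 1) = K - 1 := by omega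
  simp only [hT, h1]
  push_cast
  ring_nf

lemma binTail_pos (K : ℕ) (hK : 1 ≤ K) {x : ℝ} (hx : x ∈ Set.Ioo (0:ℝ) 1) :
    0 < binTail (2 * K) (K + 1) x := by
  obtain ⟨hx0, hx1⟩ := hx
  have h1x : (0:ℝ) < 1 - x := by linarith
  apply Finset.sum_pos
  · intro i hi
    simp only [Finset.mem_Icc] at hi
    have : 0 < ((2 * K).choose i : ℝ) := by
      exact_mod_cast Nat.choose_pos hi.2
    positivity
  · exact ⟨2 * K, by simp [Finset.mem_Icc]; omega⟩

lemma binTail_zero (K : ℕ) (hK : 1 ≤ K) : binTail (2 * K) (K + 1) (0 : ℝ) = 0 := by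
  apply Finset.sum_eq_zero
  intro i hi
  simp only [Finset.mem_Icc] at hi
  rw [zero_pow (by omega : i ≠ 0)]
  ring

section
variable (K : ℕ)

noncomputable def cF : ℝ := ((K : ℝ) + 1) * ((2 * K).choose (K + 1) : ℝ)

noncomputable def Paux (y : ℝ) : ℝ :=
  cF K * y ^ (K + 1) * (1 - y) ^ K - (((K : ℝ) + 1) - (2 * (K : ℝ) + 1) * y) * binTail (2 * K) (K + 1) y

lemma hasDerivAt_Paux (hK : 1 ≤ K) (y : ℝ) :
    HasDerivAt (Paux K) ((2 * (K : ℝ) + 1) * binTail (2 * K) (K + 1) y) y := by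
  have hF := hasDerivAt_binTail K hK y
  have h1 : HasDerivAt (fun x : ℝ => cF K * x ^ (K + 1) * (1 - x) ^ K)
      (cF K * (((K : ℝ) + 1) * y ^ K) * (1 - y) ^ K
        + cF K * y ^ (K + 1) * (((K : ℝ)) * (1 - y) ^ (K - 1) * (-1))) y := by
    have hp1 : HasDerivAt (fun x : ℝ => x ^ (K + 1)) (((K : ℝ) + 1) * y ^ K) y := by
      have := hasDerivAt_pow (K + 1) y
      simpa using this
    have hp2 : HasDerivAt (fun x : ℝ => (1 - x) ^ K)
        (((K : ℝ)) * (1 - y) ^ (K - 1) * (-1)) y :=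
      HasDerivAt.fun_pow ((hasDerivAt_id y).const_sub 1) _
    exact (hp1.const_mul (cF K)).mul hp2
  have h2 : HasDerivAt (fun x : ℝ => (((K : ℝ) + 1) - (2 * (K : ℝ) + 1) * x) * binTail (2 * K) (K + 1) x)
      ((-(2 * (K : ℝ) + 1)) * binTail (2 * K) (K + 1) y
        + (((K : ℝ) + 1) - (2 * (K : ℝ) + 1) * y) * (cF K * y ^ K * (1 - y) ^ (K - 1))) y := by
    have hl : HasDerivAt (fun x : ℝ => ((K : ℝ) + 1) - (2 * (K : ℝ) + 1) * x) (-(2 * (K : ℝ) + 1)) y := by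
      simpa using ((hasDerivAt_id y).const_mul (2 * (K : ℝ) + 1)).const_sub ((K : ℝ) + 1)
    exact hl.mul hF
  have h := h1.fun_sub h2
  refine h.congr_deriv (Eq.symm ?_)
  have hyK : y ^ (K + 1) = y ^ K * y := pow_succ y K
  have h1yK : (1 - y) ^ K = (1 - y) ^ (K - 1) * (1 - y) := by
    conv_lhs => rw [show K = (K - 1) + 1 from by omega, pow_succ]
  rw [hyK, h1yK]
  ring

lemma Paux_pos (hK : 1 ≤ K) {x : ℝ} (hx : x ∈ Set.Ioo (0:ℝ) 1) : 0 < Paux K x := by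
  have hmono : StrictMonoOn (Paux K) (Set.Icc (0:ℝ) 1) := by
    apply strictMonoOn_of_deriv_pos (convex_Icc 0 1)
    · exact fun y _ => ((hasDerivAt_Paux K hK y).continuousAt).continuousWithinAt
    · intro y hy
      rw [interior_Icc] at hy
      rw [(hasDerivAt_Paux K hK y).deriv]
      have := binTail_pos K hK hy
      positivity
  have h0 : Paux K 0 = 0 := by
    simp [Paux, binTail_zero K hK, zero_pow (by omega : K + 1 ≠ 0)]
  have := hmono (Set.mem_Icc.2 ⟨le_refl 0, by norm_num⟩)
    (Set.mem_Icc.2 ⟨hx.1.le, hx.2.le⟩) hx.1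
  rwa [h0] at this

end

noncomputable def Gfun (K : ℕ) (x : ℝ) : ℝ :=
  ((1 - x) * binTail (2 * K) (K + 1) x) / (x * binTail (2 * K) (K + 1) (1 - x))

lemma Gfun_deriv_pos (K : ℕ) (hK : 1 ≤ K) {x : ℝ} (hx : x ∈ Set.Ioo (0:ℝ) 1) :
    ∃ d : ℝ, HasDerivAt (Gfun K) d x ∧ 0 < d := by
  obtain ⟨hx0, hx1⟩ := hx
  have h1x : (0:ℝ) < 1 - x := by linarith
  set F : ℝ → ℝ := fun y => binTail (2 * K) (K + 1) y with hFdef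
  set a : ℝ := F x with ha
  set b : ℝ := F (1 - x) with hb
  have hapos : 0 < a := binTail_pos K hK ⟨hx0, hx1⟩
  have hbpos : 0 < b := binTail_pos K hK ⟨by linarith, by linarith⟩
  have hFx := hasDerivAt_binTail K hK x
  have hF1x : HasDerivAt (fun y : ℝ => F (1 - y))
      (-(cF K * (1 - x) ^ K * x ^ (K - 1))) x := by
    have hc := (hasDerivAt_binTail K hK (1 - x)).comp x ((hasDerivAt_id x).const_sub 1)
    simp only [sub_sub_cancel] at hc
    refine hc.congr_deriv (Eq.symm ?_)
    simp [cF]; try ring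
  have hN : HasDerivAt (fun y : ℝ => (1 - y) * F y)
      ((-1) * a + (1 - x) * (cF K * x ^ K * (1 - x) ^ (K - 1))) x :=
    HasDerivAt.mul ((hasDerivAt_id x).const_sub 1) hFx
  have hD : HasDerivAt (fun y : ℝ => y * F (1 - y))
      (1 * b + x * (-(cF K * (1 - x) ^ K * x ^ (K - 1)))) x :=
    HasDerivAt.mul (hasDerivAt_id x) hF1x
  have hDne : x * b ≠ 0 := by positivity
  have hdiv := hN.div hD hDne
  refine ⟨_, hdiv, ?_⟩
  apply div_pos
  · -- numerator positive
    have hPx := Paux_pos K hK (⟨hx0, hx1⟩ : x ∈ Set.Ioo (0:ℝ) 1)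
    have hP1x := Paux_pos K hK (⟨by linarith, by linarith⟩ : (1 - x) ∈ Set.Ioo (0:ℝ) 1)
    have hxK : x ^ K = x ^ (K - 1) * x := by
      conv_lhs => rw [show K = (K - 1) + 1 from by omega, pow_succ]
    have hxK1 : x ^ (K + 1) = x ^ (K - 1) * x * x := by rw [pow_succ, hxK]
    have h1K : (1 - x) ^ K = (1 - x) ^ (K - 1) * (1 - x) := by
      conv_lhs => rw [show K = (K - 1) + 1 from by omega, pow_succ]
    have h1K1 : (1 - x) ^ (K + 1) = (1 - x) ^ (K - 1) * (1 - x) * (1 - x) := by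
      rw [pow_succ, h1K]
    have key : ((-1) * a + (1 - x) * (cF K * x ^ K * (1 - x) ^ (K - 1))) * (x * b)
        - (1 - x) * a * (1 * b + x * (-(cF K * (1 - x) ^ K * x ^ (K - 1))))
        = b * Paux K x + a * Paux K (1 - x) := by
      simp only [Paux, ← ha, ← hb, hFdef, sub_sub_cancel]
      rw [hxK1, h1K1, hxK, h1K]
      ring
    rw [key]
    have := mul_pos hbpos hPx
    have := mul_pos hapos hP1x
    linarith
  · positivity

lemma gK_eq_Gfun (K : ℕ) {x : ℝ} (hx : x ∈ Set.Ioo (0:ℝ) 1) (hK : 1 ≤ K) :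
    gK K x = Gfun K x := by
  obtain ⟨hx0, hx1⟩ := hx
  have h1x : (0:ℝ) < 1 - x := by linarith
  have hb : 0 < binTail (2 * K) (K + 1) (1 - x) := binTail_pos K hK ⟨by linarith, by linarith⟩
  unfold gK Gfun
  rw [one_div, one_div]
  rw [div_eq_div_iff (by positivity) (by positivity)]
  field_simp

/-- For every integer `K ≥ 1`, the function `g_K` is strictly increasing on `(0,1)`. -/
theorem stmt_2 (K : ℕ) (hK : 1 ≤ K) :
    StrictMonoOn (gK K) (Set.Ioo (0 : ℝ) 1) := by
  have hG : StrictMonoOn (Gfun K) (Set.Ioo (0:ℝ) 1) := by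
    apply strictMonoOn_of_deriv_pos (convex_Ioo 0 1)
    · intro y hy
      obtain ⟨d, hd, _⟩ := Gfun_deriv_pos K hK hy
      exact hd.continuousAt.continuousWithinAt
    · intro y hy
      rw [interior_Ioo] at hy
      obtain ⟨d, hd, hdpos⟩ := Gfun_deriv_pos K hK hy
      rwa [hd.deriv]
  intro u hu v hv huv
  rw [gK_eq_Gfun K hu hK, gK_eq_Gfun K hv hK]
  exact hG hu hv huv
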